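/- Let L be an e-cyclic residuated lattice. For u, x ∈ L define λ_u(x) = (u\(x·u)) ∧ e and ρ_u(x) = ((u·x)/u) ∧ e. Then the following are equivalent: (1) every convex subalgebra of L is normal (L is Hamiltonian); (2) for all a ∈ L with a ≤ e and all b ∈ L, there exist m, n ∈ ℕ such that a^m ≤ λ_b(a) and a^n ≤ ρ_b(a); (3) for all a, b ∈ L, there exist m, n ∈ ℕ such that (a ∧ e)^m ≤ λ_b(a) and (a ∧ e)^n ≤ ρ_b(a); (4) for all a, b ∈ L, there exist m, n ∈ ℕ such that |a|^m ≤ λ_b(a) and |a|^n ≤ ρ_b(a). -/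
import Mathlib


universe u

/-- A residuated lattice: a lattice-ordered monoid with left and right residuals.
`ldiv x z` is `x \ z` and `rdiv z y` is `z / y`. -/
class ResiduatedLattice (α : Type u) extends Lattice α, Monoid α where
  ldiv : α → α → α
  rdiv : α → α → α
  mul_le_iff_le_ldiv : ∀ x y z : α, x * y ≤ z ↔ y ≤ ldiv x z
  mul_le_iff_le_rdiv : ∀ x y z : α, x * y ≤ z ↔ x ≤ rdiv z y

namespace ResiduatedLattice

variable {α : Type u} [ResiduatedLattice α]

/-- `L` is e-cyclic if `x \ e = e / x` for all `x`. -/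
def ECyclic (α : Type u) [ResiduatedLattice α] : Prop :=
  ∀ x : α, ldiv x 1 = rdiv 1 x

/-- Absolute value: `|x| = x ⊓ (e / x) ⊓ e`. -/
def absv (x : α) : α := x ⊓ rdiv 1 x ⊓ 1

/-- A convex subalgebra: contains `e`, closed under all the operations, and order-convex. -/
structure IsConvexSubalgebra (H : Set α) : Prop where
  one_mem : (1 : α) ∈ H
  mul_mem : ∀ ⦃x⦄, x ∈ H → ∀ ⦃y⦄, y ∈ H → x * y ∈ H
  sup_mem : ∀ ⦃x⦄, x ∈ H → ∀ ⦃y⦄, y ∈ H → x ⊔ y ∈ H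
  inf_mem : ∀ ⦃x⦄, x ∈ H → ∀ ⦃y⦄, y ∈ H → x ⊓ y ∈ H
  ldiv_mem : ∀ ⦃x⦄, x ∈ H → ∀ ⦃y⦄, y ∈ H → ldiv x y ∈ H
  rdiv_mem : ∀ ⦃x⦄, x ∈ H → ∀ ⦃y⦄, y ∈ H → rdiv x y ∈ H
  convex : ∀ ⦃a⦄, a ∈ H → ∀ ⦃b⦄, b ∈ H → ∀ ⦃x⦄, a ≤ x → x ≤ b → x ∈ H

/-- `C[S]`: the smallest convex subalgebra containing `S`. -/
def convexClosure (S : Set α) : Set α :=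
  ⋂₀ {H : Set α | IsConvexSubalgebra H ∧ S ⊆ H}

end ResiduatedLattice

open ResiduatedLattice

/-- Left conjugation `λ_u(x) = (u\(x·u)) ⊓ e`. -/
def lam {α : Type u} [ResiduatedLattice α] (u x : α) : α := ldiv u (x * u) ⊓ 1

/-- Right conjugation `ρ_u(x) = ((u·x)/u) ⊓ e`. -/
def rho {α : Type u} [ResiduatedLattice α] (u x : α) : α := rdiv (u * x) u ⊓ 1

/-- A convex subalgebra is normal if it is closed under conjugation. -/
def IsNormal {α : Type u} [ResiduatedLattice α] (H : Set α) : Prop :=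
  ∀ x ∈ H, ∀ y : α, lam y x ∈ H ∧ rho y x ∈ H

section StmtAux

variable {α : Type u} [ResiduatedLattice α]

lemma rl_mulL (z : α) {x y : α} (h : x ≤ y) : z * x ≤ z * y :=
  (mul_le_iff_le_ldiv z x (z * y)).2
    (h.trans ((mul_le_iff_le_ldiv z y (z * y)).1 le_rfl))

lemma rl_mulR (z : α) {x y : α} (h : x ≤ y) : x * z ≤ y * z :=
  (mul_le_iff_le_rdiv x z (y * z)).2
    (h.trans ((mul_le_iff_le_rdiv y z (y * z)).1 le_rfl))

lemma rl_mulMono {x y x' y' : α} (h : x ≤ x') (h' : y ≤ y') : x * y ≤ x' * y' :=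
  (rl_mulR y h).trans (rl_mulL x' h')

lemma rl_pow_le_one {a : α} (h : a ≤ 1) : ∀ n, a ^ n ≤ 1
  | 0 => by simp
  | n + 1 => by
      rw [pow_succ]
      calc a ^ n * a ≤ 1 * 1 := rl_mulMono (rl_pow_le_one h n) h
        _ = 1 := one_mul 1

lemma rl_powMono {x y : α} (h : x ≤ y) : ∀ n, x ^ n ≤ y ^ n
  | 0 => by simp
  | n + 1 => by rw [pow_succ, pow_succ]; exact rl_mulMono (rl_powMono h n) h

lemma rl_le_rdiv_one {x z : α} : z * x ≤ 1 ↔ z ≤ rdiv 1 x := mul_le_iff_le_rdiv z x 1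

lemma rl_le_ldiv_one {x z : α} : x * z ≤ 1 ↔ z ≤ ldiv x 1 := mul_le_iff_le_ldiv x z 1

lemma rl_absv_le_self {x : α} : absv x ≤ x := le_trans inf_le_left inf_le_left

lemma rl_absv_le_one {x : α} : absv x ≤ 1 := inf_le_right

lemma rl_absv_le_rdiv {x : α} : absv x ≤ rdiv 1 x := le_trans inf_le_left inf_le_right

lemma rl_le_absv {x z : α} (h1 : z ≤ x) (h2 : z * x ≤ 1) (h3 : z ≤ 1) : z ≤ absv x :=
  le_inf (le_inf h1 (rl_le_rdiv_one.1 h2)) h3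

/-- From e-cyclicity: if `z ≤ rdiv 1 x` then `x * z ≤ 1`. -/
lemma rl_ec_mul_le_one (hec : ECyclic α) {x z : α} (h : z ≤ rdiv 1 x) : x * z ≤ 1 :=
  rl_le_ldiv_one.2 (by rw [hec x]; exact h)

/-- From e-cyclicity: if `x * z ≤ 1` then `z ≤ rdiv 1 x`. -/
lemma rl_ec_le_rdiv (hec : ECyclic α) {x z : α} (h : x * z ≤ 1) : z ≤ rdiv 1 x := by
  rw [← hec x]; exact rl_le_ldiv_one.1 h

lemma rl_ldiv_prop {x y : α} : x * ldiv x y ≤ y :=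
  (mul_le_iff_le_ldiv x (ldiv x y) y).2 le_rfl

lemma rl_rdiv_prop {x y : α} : rdiv x y * y ≤ x :=
  (mul_le_iff_le_rdiv (rdiv x y) y x).2 le_rfl

/-- Principal "convex subalgebra" candidate generated by a negative element. -/
def Cgen (a : α) : Set α := {x | ∃ n, a ^ n ≤ absv x}

lemma rl_u_mul_x_le_one {u x : α} (hx : u ≤ absv x) : u * x ≤ 1 :=
  rl_le_rdiv_one.2 (hx.trans rl_absv_le_rdiv)

lemma rl_x_mul_u_le_one (hec : ECyclic α) {u x : α} (hx : u ≤ absv x) : x * u ≤ 1 :=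
  rl_ec_mul_le_one hec (hx.trans rl_absv_le_rdiv)

/-- Closure of absolute value bound under multiplication. -/
lemma rl_absv_mul {u x y : α} (hu : u ≤ 1) (hx : u ≤ absv x) (hy : u ≤ absv y) :
    u * u ≤ absv (x * y) := by
  refine rl_le_absv (rl_mulMono (hx.trans rl_absv_le_self) (hy.trans rl_absv_le_self)) ?_ ?_
  · calc u * u * (x * y) = u * (u * x) * y := by rw [mul_assoc, mul_assoc, mul_assoc]
      _ ≤ u * 1 * y := rl_mulR y (rl_mulL u (rl_u_mul_x_le_one hx))
      _ = u * y := by rw [mul_one]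
      _ ≤ 1 := rl_u_mul_x_le_one hy
  · calc u * u ≤ 1 * 1 := rl_mulMono hu hu
      _ = 1 := one_mul 1

lemma rl_absv_inf {u x y : α} (hu : u ≤ 1) (hx : u ≤ absv x) (hy : u ≤ absv y) :
    u ≤ absv (x ⊓ y) := by
  refine rl_le_absv (le_inf (hx.trans rl_absv_le_self) (hy.trans rl_absv_le_self)) ?_ hu
  exact (rl_mulL u inf_le_left).trans (rl_u_mul_x_le_one hx)

lemma rl_absv_sup {u x y : α} (hu : u ≤ 1) (hx : u ≤ absv x) (hy : u ≤ absv y) :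
    u ≤ absv (x ⊔ y) := by
  refine rl_le_absv ((hx.trans rl_absv_le_self).trans le_sup_left) ?_ hu
  rw [mul_le_iff_le_ldiv]
  exact sup_le ((mul_le_iff_le_ldiv u x 1).1 (rl_u_mul_x_le_one hx))
    ((mul_le_iff_le_ldiv u y 1).1 (rl_u_mul_x_le_one hy))

lemma rl_absv_ldiv (hec : ECyclic α) {u x y : α} (hu : u ≤ 1) (hx : u ≤ absv x)
    (hy : u ≤ absv y) : u * u ≤ absv (ldiv x y) := by
  refine rl_le_absv ?_ ?_ ?_
  · rw [← mul_le_iff_le_ldiv]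
    calc x * (u * u) = x * u * u := by rw [mul_assoc]
      _ ≤ 1 * u := rl_mulR u (rl_x_mul_u_le_one hec hx)
      _ = u := one_mul u
      _ ≤ y := hy.trans rl_absv_le_self
  · calc u * u * ldiv x y = u * (u * ldiv x y) := by rw [mul_assoc]
      _ ≤ u * (x * ldiv x y) := rl_mulL u (rl_mulR _ (hx.trans rl_absv_le_self))
      _ ≤ u * y := rl_mulL u rl_ldiv_prop
      _ ≤ 1 := rl_u_mul_x_le_one hy
  · calc u * u ≤ 1 * 1 := rl_mulMono hu hu
      _ = 1 := one_mul 1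

lemma rl_absv_rdiv (hec : ECyclic α) {u x y : α} (hu : u ≤ 1) (hx : u ≤ absv x)
    (hy : u ≤ absv y) : u * u ≤ absv (rdiv x y) := by
  refine rl_le_absv ?_ ?_ ?_
  · rw [← mul_le_iff_le_rdiv]
    calc u * u * y = u * (u * y) := by rw [mul_assoc]
      _ ≤ u * 1 := rl_mulL u (rl_u_mul_x_le_one hy)
      _ = u := mul_one u
      _ ≤ x := hx.trans rl_absv_le_self
  · refine rl_le_rdiv_one.2 (rl_ec_le_rdiv hec ?_)
    calc rdiv x y * (u * u) = rdiv x y * u * u := by rw [← mul_assoc]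
      _ ≤ rdiv x y * y * u := rl_mulR u (rl_mulL _ (hy.trans rl_absv_le_self))
      _ ≤ x * u := rl_mulR u rl_rdiv_prop
      _ ≤ 1 := rl_x_mul_u_le_one hec hx
  · calc u * u ≤ 1 * 1 := rl_mulMono hu hu
      _ = 1 := one_mul 1

lemma rl_pow_add_le_left {a : α} (ha : a ≤ 1) (m n : ℕ) : a ^ (m + n) ≤ a ^ m := by
  rw [pow_add]
  calc a ^ m * a ^ n ≤ a ^ m * 1 := rl_mulL _ (rl_pow_le_one ha n)
    _ = a ^ m := mul_one _

lemma rl_pow_add_le_right {a : α} (ha : a ≤ 1) (m n : ℕ) : a ^ (m + n) ≤ a ^ n := by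
  rw [pow_add]
  calc a ^ m * a ^ n ≤ 1 * a ^ n := rl_mulR _ (rl_pow_le_one ha m)
    _ = a ^ n := one_mul _

lemma rl_cgen_subalg (hec : ECyclic α) {a : α} (ha : a ≤ 1) :
    IsConvexSubalgebra (Cgen a) := by
  have hpow : ∀ n, a ^ n ≤ (1 : α) := rl_pow_le_one ha
  constructor
  · exact ⟨0, by rw [pow_zero]; exact rl_le_absv le_rfl (by rw [mul_one]) le_rfl⟩
  · rintro x ⟨m, hm⟩ y ⟨n, hn⟩
    refine ⟨(m + n) + (m + n), ?_⟩
    rw [pow_add]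
    exact rl_absv_mul (hpow _) ((rl_pow_add_le_left ha m n).trans hm)
      ((rl_pow_add_le_right ha m n).trans hn)
  · rintro x ⟨m, hm⟩ y ⟨n, hn⟩
    exact ⟨m + n, rl_absv_sup (hpow _) ((rl_pow_add_le_left ha m n).trans hm)
      ((rl_pow_add_le_right ha m n).trans hn)⟩
  · rintro x ⟨m, hm⟩ y ⟨n, hn⟩
    exact ⟨m + n, rl_absv_inf (hpow _) ((rl_pow_add_le_left ha m n).trans hm)
      ((rl_pow_add_le_right ha m n).trans hn)⟩
  · rintro x ⟨m, hm⟩ y ⟨n, hn⟩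
    refine ⟨(m + n) + (m + n), ?_⟩
    rw [pow_add]
    exact rl_absv_ldiv hec (hpow _) ((rl_pow_add_le_left ha m n).trans hm)
      ((rl_pow_add_le_right ha m n).trans hn)
  · rintro x ⟨m, hm⟩ y ⟨n, hn⟩
    refine ⟨(m + n) + (m + n), ?_⟩
    rw [pow_add]
    exact rl_absv_rdiv hec (hpow _) ((rl_pow_add_le_left ha m n).trans hm)
      ((rl_pow_add_le_right ha m n).trans hn)
  · rintro b1 ⟨m, hm⟩ b2 ⟨n, hn⟩ x h1 h2
    refine ⟨m + n, rl_le_absv ?_ ?_ (hpow _)⟩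
    · exact ((rl_pow_add_le_left ha m n).trans hm).trans (rl_absv_le_self.trans h1)
    · calc a ^ (m + n) * x
          ≤ rdiv 1 b2 * x :=
            rl_mulR x (((rl_pow_add_le_right ha m n).trans hn).trans rl_absv_le_rdiv)
        _ ≤ rdiv 1 b2 * b2 := rl_mulL _ h2
        _ ≤ 1 := rl_le_rdiv_one.2 le_rfl

lemma rl_lam_mono (b : α) {x y : α} (h : x ≤ y) : lam b x ≤ lam b y := by
  refine inf_le_inf_right 1 ?_
  rw [← mul_le_iff_le_ldiv]
  exact rl_ldiv_prop.trans (rl_mulR b h)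

lemma rl_rho_mono (b : α) {x y : α} (h : x ≤ y) : rho b x ≤ rho b y := by
  refine inf_le_inf_right 1 ?_
  rw [← mul_le_iff_le_rdiv]
  exact rl_rdiv_prop.trans (rl_mulL b h)

lemma rl_pow_mem {H : Set α} (hH : IsConvexSubalgebra H) {z : α} (hz : z ∈ H) :
    ∀ n, z ^ n ∈ H
  | 0 => by rw [pow_zero]; exact hH.one_mem
  | n + 1 => by rw [pow_succ]; exact hH.mul_mem (rl_pow_mem hH hz n) hz

lemma rl_absv_mem {H : Set α} (hH : IsConvexSubalgebra H) {x : α} (hx : x ∈ H) :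
    absv x ∈ H :=
  hH.inf_mem (hH.inf_mem hx (hH.rdiv_mem hH.one_mem hx)) hH.one_mem

end StmtAux

/-- characterizations of Hamiltonian e-cyclic residuated lattices. -/
theorem stmt19 {α : Type u} [ResiduatedLattice α] (hec : ECyclic α) :
    List.TFAE [
      (∀ H : Set α, IsConvexSubalgebra H → IsNormal H),
      (∀ a : α, a ≤ 1 → ∀ b : α, ∃ m n : ℕ, a ^ m ≤ lam b a ∧ a ^ n ≤ rho b a),
      (∀ a b : α, ∃ m n : ℕ, (a ⊓ 1) ^ m ≤ lam b a ∧ (a ⊓ 1) ^ n ≤ rho b a),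
      (∀ a b : α, ∃ m n : ℕ, absv a ^ m ≤ lam b a ∧ absv a ^ n ≤ rho b a)] := by
  tfae_have 1 → 2 := by
    intro h1 a ha b
    have hsub := rl_cgen_subalg hec ha
    have haa : a * a ≤ 1 := by
      calc a * a ≤ 1 * 1 := rl_mulMono ha ha
        _ = 1 := one_mul 1
    have hamem : a ∈ Cgen a :=
      ⟨1, by rw [pow_one]; exact rl_le_absv le_rfl haa ha⟩
    obtain ⟨hl, hr⟩ := h1 _ hsub a hamem b
    obtain ⟨m, hm⟩ := hl
    obtain ⟨n, hn⟩ := hr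
    exact ⟨m, n, hm.trans rl_absv_le_self, hn.trans rl_absv_le_self⟩
  tfae_have 2 → 3 := by
    intro h2 a b
    obtain ⟨m, n, hm, hn⟩ := h2 (a ⊓ 1) inf_le_right b
    exact ⟨m, n, hm.trans (rl_lam_mono b inf_le_left),
      hn.trans (rl_rho_mono b inf_le_left)⟩
  tfae_have 3 → 4 := by
    intro h3 a b
    obtain ⟨m, n, hm, hn⟩ := h3 a b
    have habs : absv a ≤ a ⊓ 1 := le_inf rl_absv_le_self rl_absv_le_one
    exact ⟨m, n, (rl_powMono habs m).trans hm, (rl_powMono habs n).trans hn⟩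
  tfae_have 4 → 1 := by
    intro h4 H hH x hx y
    obtain ⟨m, n, hm, hn⟩ := h4 x y
    have habs := rl_absv_mem hH hx
    constructor
    · exact hH.convex (rl_pow_mem hH habs m) hH.one_mem hm inf_le_right
    · exact hH.convex (rl_pow_mem hH habs n) hH.one_mem hn inf_le_right
  tfae_finish
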